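/- Let X,d be a standard quasi-metric space and x ∈ X. If for every ε > 0 the d⁺-open ball B((x,0), <ε) = {(y,s) : d(x,y) + s < ε} is Scott-open in B(X,d), then x is d-finite: for every directed family of formal balls (y_i, s_i) with supremum of the form (y,0), d(x,y) = inf_i (d(x,y_i) + s_i). -/

import Mathlib

open scoped ENNReal NNReal Classical

/-- A formal ball: a point together with a non-negative real radius. -/
structure FormalBall (X : Type*) where
  center : X
  radius : ℝ≥0

/-- A quasi-metric on `X`: a `[0,∞]`-valued distance with `d x x = 0`, the triangle
inequality, and `d x y = d y x = 0 → x = y`. -/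
structure QuasiMetric (X : Type*) where
  d : X → X → ℝ≥0∞
  refl : ∀ x, d x x = 0
  triangle : ∀ x y z, d x z ≤ d x y + d y z
  separated : ∀ x y, d x y = 0 → d y x = 0 → x = y

/-- The order on formal balls: `(x,r) ≤ (y,s)` iff `d x y ≤ r - s`
(equivalently `s ≤ r` and `d x y ≤ r - s`). -/
def ballLE {X : Type*} (q : QuasiMetric X) (b c : FormalBall X) : Prop :=
  c.radius ≤ b.radius ∧ q.d b.center c.center ≤ ↑(b.radius - c.radius)

/-- The partial order of formal balls `B(X,d)`. -/
def ballOrder {X : Type*} (q : QuasiMetric X) : PartialOrder (FormalBall X) where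
  le := ballLE q
  le_refl b := ⟨le_rfl, by simp [ballLE, q.refl]⟩
  le_trans a b c hab hbc := ⟨hbc.1.trans hab.1, by
    calc q.d a.center c.center ≤ q.d a.center b.center + q.d b.center c.center :=
          q.triangle _ _ _
      _ ≤ ↑(a.radius - b.radius) + ↑(b.radius - c.radius) := add_le_add hab.2 hbc.2
      _ = ↑(a.radius - c.radius) := by
          rw [← ENNReal.coe_add, tsub_add_tsub_cancel hab.1 hbc.1]⟩
  le_antisymm a b hab hba := by
    have hr : b.radius = a.radius := le_antisymm hab.1 hba.1
    have h1 : q.d a.center b.center = 0 := le_antisymm (by simpa [hr] using hab.2) bot_le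
    have h2 : q.d b.center a.center = 0 := le_antisymm (by simpa [hr] using hba.2) bot_le
    have hc := q.separated _ _ h1 h2
    cases a; cases b; simp_all

/-- Standardness: a directed family of formal balls has a supremum iff the family with all
radii uniformly shifted by `s` has one. -/
def Standard {X : Type*} (q : QuasiMetric X) : Prop :=
  letI := ballOrder q
  ∀ S : Set (FormalBall X), S.Nonempty → DirectedOn (· ≤ ·) S → ∀ s : ℝ≥0,
    ((∃ b, IsLUB S b) ↔
      ∃ b, IsLUB ((fun c : FormalBall X => FormalBall.mk c.center (c.radius + s)) '' S) b)

/-- Scott-open: upward closed and inaccessible by suprema of nonempty directed sets. -/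
def ScottOpen {α : Type*} [Preorder α] (U : Set α) : Prop :=
  (∀ a ∈ U, ∀ b, a ≤ b → b ∈ U) ∧
  ∀ S : Set α, S.Nonempty → DirectedOn (· ≤ ·) S → ∀ a, IsLUB S a → a ∈ U → (S ∩ U).Nonempty

/-- in a standard quasi-metric space, if every `d⁺`-open ball
`B((x,0),<ε) = {(y,s) : d(x,y) + s < ε}` is Scott-open (i.e. `x` is a center point),
then `x` is `d`-finite: for every directed family of formal balls with supremum `(y,0)`,
`d(x,y) = inf_i (d(x,y_i) + s_i)`. -/
theorem dFinite_of_center {X : Type*} (q : QuasiMetric X) (hstd : Standard q) (x : X)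
    (hcenter : ∀ ε : ℝ≥0, 0 < ε →
      (letI := ballOrder q;
        ScottOpen {b : FormalBall X | q.d x b.center + (b.radius : ℝ≥0∞) < (ε : ℝ≥0∞)})) :
    ∀ S : Set (FormalBall X), S.Nonempty →
      (letI := ballOrder q; DirectedOn (· ≤ ·) S) →
      ∀ y : X, (letI := ballOrder q; IsLUB S ⟨y, 0⟩) →
        q.d x y = ⨅ b ∈ S, (q.d x b.center + (b.radius : ℝ≥0∞)) := by
  letI := ballOrder q
  intro S hS hdir y hlub
  apply le_antisymm
  · refine le_iInf fun b => le_iInf fun hb => ?_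
    have hle : b ≤ (⟨y, 0⟩ : FormalBall X) := hlub.1 hb
    have h2 : q.d b.center y ≤ (b.radius : ℝ≥0∞) := by
      simpa using hle.2
    calc q.d x y ≤ q.d x b.center + q.d b.center y := q.triangle _ _ _
      _ ≤ q.d x b.center + (b.radius : ℝ≥0∞) := add_le_add le_rfl h2
  · by_contra h
    push_neg at h
    obtain ⟨ε, hε1, hε2⟩ := ENNReal.lt_iff_exists_nnreal_btwn.1 h
    have hεpos : 0 < ε := by
      have : (0 : ℝ≥0∞) < ε := lt_of_le_of_lt zero_le hε1
      exact_mod_cast this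
    have hU := hcenter ε hεpos
    have hmem : (⟨y, 0⟩ : FormalBall X) ∈
        {b : FormalBall X | q.d x b.center + (b.radius : ℝ≥0∞) < (ε : ℝ≥0∞)} := by
      simpa using hε1
    obtain ⟨b, hbS, hbU⟩ := hU.2 S hS hdir _ hlub hmem
    have hinf : ⨅ b ∈ S, (q.d x b.center + (b.radius : ℝ≥0∞)) ≤
        q.d x b.center + (b.radius : ℝ≥0∞) := iInf₂_le b hbS
    exact absurd (hinf.trans_lt hbU) (not_lt.2 hε2.le)
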